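/- Let ⟨·|·⟩ be a compatibility support mapping for S and D(X,A) = ⟨X|{1}⟩ ⊖ ⟨X|A∖X⟩. Then for every finite A ⊆ S, the family (D(X,A))_{X⊆A} is a decomposition of unit: the sum ⊕_{X⊆A} D(X,A) is defined and equals 1. -/

import Mathlib

universe u

/-- An effect algebra: a partial commutative, associative operation `add`
(modelled as an `Option`-valued total operation), with constants `zero`, `one`,
unique orthosupplements, and `a ⊕ 1` defined only for `a = 0`. -/
structure EffectAlgebra (α : Type u) where
  add : α → α → Option α
  zero : α
  one : α
  add_comm : ∀ a b : α, add a b = add b a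
  add_assoc : ∀ a b c ab abc : α, add a b = some ab → add ab c = some abc →
    ∃ bc : α, add b c = some bc ∧ add a bc = some abc
  orthosupp : ∀ a : α, ∃! a' : α, add a a' = some one
  add_one : ∀ a b : α, add a one = some b → a = zero

namespace EffectAlgebra

variable {α : Type u}

/-- The induced order: `a ≤ b` iff `∃ c, a ⊕ c = b`. -/
def le (E : EffectAlgebra α) (a b : α) : Prop := ∃ c, E.add a c = some b

/-- The orthosupplement `a'`. -/
noncomputable def compl (E : EffectAlgebra α) (a : α) : α :=
  (E.orthosupp a).exists.choose

open Classical in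
/-- The partial difference `b ⊖ a` (junk value `0` when `a ≤ b` fails). -/
noncomputable def sub (E : EffectAlgebra α) (b a : α) : α :=
  if h : ∃ c, E.add a c = some b then h.choose else E.zero

/-- Iterated partial sum of a list of elements. -/
noncomputable def osum (E : EffectAlgebra α) : List α → Option α
  | [] => some E.zero
  | a :: l => (E.osum l).bind fun s => E.add a s

end EffectAlgebra

namespace EffectAlgebra

variable {α : Type u}

/-- `f` is a compatibility support mapping for `S` (with `1 ∈ S`). -/
def IsCSM [DecidableEq α] (E : EffectAlgebra α) (S : Set α) (f : Finset α → Finset α → α) : Prop :=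
  E.one ∈ S ∧
  (∀ U V₁ V₂ : Finset α, ↑U ⊆ S → ↑V₁ ⊆ S → ↑V₂ ⊆ S → V₁ ⊆ V₂ →
    E.le (f U V₁) (f U V₂)) ∧
  (∀ U V : Finset α, ↑U ⊆ S → ↑V ⊆ S → E.le (f U V) (f U {E.one})) ∧
  (∀ U : Finset α, ↑U ⊆ S → f U ∅ = E.zero) ∧
  (∀ c ∈ S, f ∅ {c} = c) ∧
  (∀ (U V : Finset α) (c : α), ↑U ⊆ S → ↑V ⊆ S → c ∈ S → c ∉ U → c ∉ V →
    E.sub (f (insert c U) {E.one}) (f (insert c U) V) =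
      E.sub (f U (insert c V)) (f U V))

/-- `f` is a strong compatibility support mapping for `S`:
condition (e*) holds with no restriction on `c`. -/
def IsStrongCSM [DecidableEq α] (E : EffectAlgebra α) (S : Set α) (f : Finset α → Finset α → α) : Prop :=
  E.one ∈ S ∧
  (∀ U V₁ V₂ : Finset α, ↑U ⊆ S → ↑V₁ ⊆ S → ↑V₂ ⊆ S → V₁ ⊆ V₂ →
    E.le (f U V₁) (f U V₂)) ∧
  (∀ U V : Finset α, ↑U ⊆ S → ↑V ⊆ S → E.le (f U V) (f U {E.one})) ∧
  (∀ U : Finset α, ↑U ⊆ S → f U ∅ = E.zero) ∧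
  (∀ c ∈ S, f ∅ {c} = c) ∧
  (∀ (U V : Finset α) (c : α), ↑U ⊆ S → ↑V ⊆ S → c ∈ S →
    E.sub (f (insert c U) {E.one}) (f (insert c U) V) =
      E.sub (f U (insert c V)) (f U V))

/-- `D(X,A) = ⟨X|{1}⟩ ⊖ ⟨X|A∖X⟩`. -/
noncomputable def Dmap [DecidableEq α] (E : EffectAlgebra α)
    (f : Finset α → Finset α → α) (X A : Finset α) : α :=
  E.sub (f X {E.one}) (f X (A \ X))

end EffectAlgebra



namespace EffectAlgebra

variable {α : Type u}

theorem cancel (E : EffectAlgebra α) {a x y b : α}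
    (hx : E.add a x = some b) (hy : E.add a y = some b) : x = y := by
  obtain ⟨b', hb'⟩ := (E.orthosupp b).exists
  obtain ⟨w, hw1, hw2⟩ := E.add_assoc a x b' b E.one hx hb'
  obtain ⟨w', hw1', hw2'⟩ := E.add_assoc a y b' b E.one hy hb'
  have hww : w = w' := (E.orthosupp a).unique hw2 hw2'
  subst hww
  obtain ⟨v, hv1, hv2⟩ := E.add_assoc x b' a w E.one hw1 ((E.add_comm w a) ▸ hw2)
  obtain ⟨v', hv1', hv2'⟩ := E.add_assoc y b' a w E.one hw1' ((E.add_comm w a) ▸ hw2)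
  have hvv : v = v' := by rw [hv1] at hv1'; exact (Option.some.inj hv1')
  subst hvv
  exact (E.orthosupp v).unique ((E.add_comm v x) ▸ hv2) ((E.add_comm v y) ▸ hv2')

theorem add_zero' (E : EffectAlgebra α) (a : α) : E.add a E.zero = some a := by
  -- first: 1 ⊕ 0 = 1
  obtain ⟨z, hz⟩ := (E.orthosupp E.one).exists
  have hz0 : z = E.zero := E.add_one z E.one ((E.add_comm z E.one) ▸ hz)
  have hone : E.add E.one E.zero = some E.one := hz0 ▸ hz
  obtain ⟨a', ha'⟩ := (E.orthosupp a).exists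
  have ha'a : E.add a' a = some E.one := (E.add_comm a a') ▸ ha'
  obtain ⟨w, hw1, hw2⟩ := E.add_assoc a' a E.zero E.one E.one ha'a hone
  have : a = w := E.cancel ha'a hw2
  exact this ▸ hw1

theorem sub_eq (E : EffectAlgebra α) {a c b : α} (h : E.add a c = some b) :
    E.sub b a = c := by
  have hex : ∃ c, E.add a c = some b := ⟨c, h⟩
  rw [sub, dif_pos hex]
  exact E.cancel hex.choose_spec h

theorem sub_add_sub (E : EffectAlgebra α) {a b t : α} (hab : E.le a b) (hbt : E.le b t) :
    E.add (E.sub t b) (E.sub b a) = some (E.sub t a) := by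
  obtain ⟨u, hu⟩ := hab
  obtain ⟨v, hv⟩ := hbt
  obtain ⟨w, hw1, hw2⟩ := E.add_assoc a u v b t hu hv
  rw [E.sub_eq hu, E.sub_eq hv, E.sub_eq hw2, E.add_comm]
  exact hw1

theorem assoc' (E : EffectAlgebra α) {a b c bc abc : α}
    (h1 : E.add b c = some bc) (h2 : E.add a bc = some abc) :
    ∃ ab, E.add a b = some ab ∧ E.add ab c = some abc := by
  obtain ⟨ba, hba, hcba⟩ := E.add_assoc c b a bc abc ((E.add_comm b c) ▸ h1)
    ((E.add_comm a bc) ▸ h2)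
  exact ⟨ba, (E.add_comm b a) ▸ hba, (E.add_comm ba c) ▸ hcba⟩

theorem add_swap (E : EffectAlgebra α) {a b s bs r : α}
    (h1 : E.add b s = some bs) (h2 : E.add a bs = some r) :
    ∃ as, E.add a s = some as ∧ E.add b as = some r := by
  obtain ⟨ba, hba, h3⟩ := E.add_assoc s b a bs r ((E.add_comm b s) ▸ h1)
    ((E.add_comm a bs) ▸ h2)
  exact E.add_assoc b a s ba r ((E.add_comm b a) ▸ hba) ((E.add_comm ba s) ▸ h3)

theorem bindadd_comm (E : EffectAlgebra α) (a b : α) (x : Option α) :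
    (x.bind fun s => E.add b s).bind (fun s => E.add a s)
      = (x.bind fun s => E.add a s).bind (fun s => E.add b s) := by
  cases x with
  | none => rfl
  | some s =>
    simp only [Option.bind_some]
    have key : ∀ a b r : α, (E.add b s).bind (E.add a) = some r →
        (E.add a s).bind (E.add b) = some r := by
      intro a b r h
      rcases hbs : E.add b s with _ | bs
      · rw [hbs] at h; simp at h
      · rw [hbs, Option.bind_some] at h
        obtain ⟨as, ha1, ha2⟩ := E.add_swap hbs h
        rw [ha1, Option.bind_some]; exact ha2
    rcases h1 : (E.add b s).bind (E.add a) with _ | r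
    · rcases h2 : (E.add a s).bind (E.add b) with _ | r
      · rfl
      · have := key b a r h2
        rw [this] at h1; cases h1
    · exact (key a b r h1).symm

theorem osum_perm (E : EffectAlgebra α) {l l' : List α} (h : l.Perm l') :
    E.osum l = E.osum l' := by
  induction h with
  | nil => rfl
  | cons a _ ih => simp only [osum, ih]
  | swap a b l =>
    simp only [osum]
    exact E.bindadd_comm b a (E.osum l)
  | trans _ _ ih1 ih2 => exact ih1.trans ih2

theorem osum_combine (E : EffectAlgebra α) {a b s : α} (hs : E.add a b = some s)
    (l : List α) : E.osum (a :: b :: l) = E.osum (s :: l) := by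
  simp only [osum]
  rcases h : E.osum l with _ | t
  · rfl
  · simp only [Option.bind_some]
    rcases hbt : E.add b t with _ | bt
    · rcases hst : E.add s t with _ | r
      · rfl
      · obtain ⟨bt', h1, _⟩ := E.add_assoc a b t s r hs hst
        rw [h1] at hbt; cases hbt
    · simp only [Option.bind_some]
      rcases habt : E.add a bt with _ | r
      · rcases hst : E.add s t with _ | r
        · rfl
        · obtain ⟨bt', h1, h2⟩ := E.add_assoc a b t s r hs hst
          rw [h1] at hbt
          rw [Option.some.inj hbt] at h2
          rw [habt] at h2; cases h2
      · obtain ⟨ab, h1, h2⟩ := E.assoc' hbt habt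
        rw [hs] at h1
        rw [← Option.some.inj h1] at h2
        exact h2.symm

theorem osum_zip (E : EffectAlgebra α) {β : Type*} (g h k : β → α) :
    ∀ l : List β, (∀ x ∈ l, E.add (g x) (h x) = some (k x)) →
    E.osum (l.map g ++ l.map h) = E.osum (l.map k) := by
  intro l
  induction l with
  | nil => intro _; rfl
  | cons x l ih =>
    intro hc
    have perm : ((x :: l).map g ++ (x :: l).map h).Perm
        (g x :: h x :: (l.map g ++ l.map h)) := by
      simp only [List.map_cons, List.cons_append]
      exact (List.perm_middle).cons (g x)
    rw [E.osum_perm perm, E.osum_combine (hc x List.mem_cons_self)]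
    show (E.osum (l.map g ++ l.map h)).bind (E.add (k x)) = _
    rw [ih (fun y hy => hc y (List.mem_cons_of_mem x hy))]
    rfl

theorem powerset_insert_perm {β : Type*} [DecidableEq α] {c : α} {A : Finset α}
    (hc : c ∉ A) (F : Finset α → β) :
    ((insert c A).powerset.toList.map F).Perm
      (A.powerset.toList.map F ++ A.powerset.toList.map (fun X => F (insert c X))) := by
  rw [← Multiset.coe_eq_coe]
  have hdisj : Disjoint A.powerset (A.powerset.image (insert c)) := by
    rw [Finset.disjoint_left]
    intro X hX hX'
    obtain ⟨Y, _, rfl⟩ := Finset.mem_image.mp hX'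
    exact hc (Finset.mem_powerset.mp hX (Finset.mem_insert_self c Y))
  have hval : (insert c A).powerset.val
      = A.powerset.val + (A.powerset.image (insert c)).val := by
    rw [Finset.powerset_insert, ← Finset.disjUnion_eq_union _ _ hdisj]
    rfl
  have hinj : Set.InjOn (insert c) (↑A.powerset : Set (Finset α)) := by
    intro X hX Y hY hXY
    have hcX : c ∉ X := fun h => hc (Finset.mem_powerset.mp (by exact_mod_cast hX) h)
    have hcY : c ∉ Y := fun h => hc (Finset.mem_powerset.mp (by exact_mod_cast hY) h)
    rw [← Finset.erase_insert hcX, ← Finset.erase_insert hcY, hXY]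
  have himg : (A.powerset.image (insert c)).val = A.powerset.val.map (insert c) :=
    Finset.image_val_of_injOn hinj
  simp only [← Multiset.map_coe, ← Multiset.coe_add, Finset.coe_toList]
  rw [hval, himg, Multiset.map_add, Multiset.map_map]
  rfl

end EffectAlgebra

/-- For every finite `A ⊆ S`, the family `(D(X,A))_{X⊆A}` is a decomposition
of unit. -/
theorem csm_D_decomposition_of_unit {α : Type u} [DecidableEq α] (E : EffectAlgebra α)
    (S : Set α) (f : Finset α → Finset α → α) (hf : E.IsCSM S f)
    (A : Finset α) (hA : ↑A ⊆ S) :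
    E.osum (A.powerset.toList.map (fun X => E.Dmap f X A)) = some E.one := by
  classical
  obtain ⟨h1S, hmono, hle1, hempty, hsing, he⟩ := hf
  revert hA
  induction A using Finset.induction_on with
  | empty =>
    intro _
    have hf1 : f ∅ {E.one} = E.one := hsing E.one h1S
    have hf0 : f ∅ ∅ = E.zero := hempty ∅ (by simp)
    have hD : E.Dmap f ∅ ∅ = E.one := by
      rw [EffectAlgebra.Dmap]
      simp only [Finset.sdiff_empty, Finset.empty_sdiff, hf1, hf0]
      exact E.sub_eq ((E.add_comm E.zero E.one) ▸ E.add_zero' E.one)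
    rw [Finset.powerset_empty, Finset.toList_singleton]
    simp only [List.map_cons, List.map_nil, hD]
    show (some E.zero).bind (fun s => E.add E.one s) = some E.one
    rw [Option.bind_some]
    exact E.add_zero' E.one
  | @insert c A' hc ih =>
    intro hA
    have hA' : (↑A' : Set α) ⊆ S := by
      intro x hx; exact hA (by simpa using Or.inr hx)
    have hcS : c ∈ S := hA (by simp)
    have key : ∀ X ∈ A'.powerset,
        E.add (E.Dmap f X (insert c A')) (E.Dmap f (insert c X) (insert c A'))
          = some (E.Dmap f X A') := by
      intro X hX
      have hXA' : X ⊆ A' := Finset.mem_powerset.mp hX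
      have hcX : c ∉ X := fun h => hc (hXA' h)
      have hXS : (↑X : Set α) ⊆ S := fun x hx => hA' (hXA' hx)
      have hdS : (↑(A' \ X) : Set α) ⊆ S := fun x hx => by
        have : x ∈ A' \ X := by exact_mod_cast hx
        exact hA' (Finset.mem_sdiff.mp this).1
      have hidS : (↑(insert c (A' \ X)) : Set α) ⊆ S := by
        rw [Finset.coe_insert]
        exact Set.insert_subset hcS hdS
      have hicXS : (↑(insert c X) : Set α) ⊆ S := by
        rw [Finset.coe_insert]
        exact Set.insert_subset hcS hXS
      have hcd : c ∉ A' \ X := fun h => hc (Finset.mem_sdiff.mp h).1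
      have eq1 : (insert c A') \ X = insert c (A' \ X) := by
        ext y
        simp only [Finset.mem_sdiff, Finset.mem_insert]
        constructor
        · rintro ⟨hy1 | hy1, hy2⟩
          · exact Or.inl hy1
          · exact Or.inr ⟨hy1, hy2⟩
        · rintro (rfl | ⟨hy1, hy2⟩)
          · exact ⟨Or.inl rfl, hcX⟩
          · exact ⟨Or.inr hy1, hy2⟩
      have eq2 : (insert c A') \ (insert c X) = A' \ X := by
        ext y
        simp only [Finset.mem_sdiff, Finset.mem_insert, not_or]
        constructor
        · rintro ⟨hy1 | hy1, hy2, hy3⟩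
          · exact absurd hy1 hy2
          · exact ⟨hy1, hy3⟩
        · rintro ⟨hy1, hy2⟩
          exact ⟨Or.inr hy1, fun h => hc (h ▸ hy1), hy2⟩
      have heq := he X (A' \ X) c hXS hdS hcS hcX hcd
      have hab : E.le (f X (A' \ X)) (f X (insert c (A' \ X))) :=
        hmono X (A' \ X) (insert c (A' \ X)) hXS hdS hidS
          (Finset.subset_insert c (A' \ X))
      have hbt : E.le (f X (insert c (A' \ X))) (f X {E.one}) :=
        hle1 X (insert c (A' \ X)) hXS hidS
      rw [EffectAlgebra.Dmap, EffectAlgebra.Dmap, EffectAlgebra.Dmap, eq1, eq2, heq]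
      exact E.sub_add_sub hab hbt
    have perm := EffectAlgebra.powerset_insert_perm hc
      (fun X => E.Dmap f X (insert c A'))
    rw [E.osum_perm (List.Perm.map (fun X => E.Dmap f X (insert c A')) (List.Perm.refl _) |>.trans perm)]
    rw [E.osum_zip (fun X => E.Dmap f X (insert c A'))
      (fun X => E.Dmap f (insert c X) (insert c A'))
      (fun X => E.Dmap f X A') A'.powerset.toList
      (fun X hX => key X (Finset.mem_toList.mp hX))]
    exact ih hA'
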